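/- Let p_1,\u2026,p_m, q_1,\u2026,q_m be indeterminates and define \u03c6(z) = (1 + \u2211_j p_j z) \u220f_{i=1}^m (1 - (q_i - r_{i-1})z) / \u220f_{i=1}^m (1 - (q_i - r_i)z), with r_i = p_1+\u22ef+p_i, viewed as a formal power series in z. Define R_k = -(1/(k-1))[y^k]\u03c6(y)^{k-1} for k \u2265 2. Then for every k \u2265 1, the polynomial (-1)^k R_{k+1}(p_1,\u2026,p_m; -q_1,\u2026,-q_m), i.e. (-1)^k R_{k+1} with each q_i replaced by -q_i, has all coefficients nonnegative as a polynomial in p_1,\u2026,p_m,q_1,\u2026,q_m. -/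

import Mathlib

/-- The polynomial ring `ℚ[p_1,…,p_m,q_1,…,q_m]`. -/
abbrev PQRing (m : ℕ) : Type := MvPolynomial (Fin m ⊕ Fin m) ℚ

noncomputable def pvar {m : ℕ} (i : Fin m) : PQRing m := MvPolynomial.X (Sum.inl i)
noncomputable def qvar {m : ℕ} (i : Fin m) : PQRing m := MvPolynomial.X (Sum.inr i)

/-- `r_i = p_1 + ⋯ + p_i` (with `r_0 = 0`). -/
noncomputable def rsum {m : ℕ} (i : ℕ) : PQRing m :=
  ∑ j : Fin m, if (j : ℕ) < i then pvar j else 0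

/-- The geometric series `1/(1 - a z) = ∑_{n ≥ 0} a^n z^n`. -/
noncomputable def geom {A : Type*} [CommRing A] (a : A) : PowerSeries A :=
  PowerSeries.mk fun n => a ^ n

/-- `φ(z) = (1 + ∑_j p_j z) ∏_{i=1}^m (1 - (q_i - r_{i-1})z) / ∏_{i=1}^m (1 - (q_i - r_i)z)`
as a formal power series (0-indexed: `r_{i-1} ↦ rsum i`, `r_i ↦ rsum (i+1)`). -/
noncomputable def phi11 (m : ℕ) : PowerSeries (PQRing m) :=
  (1 + PowerSeries.C (∑ j : Fin m, pvar j) * PowerSeries.X) *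
    ∏ i : Fin m,
      ((1 - PowerSeries.C (qvar i - rsum (i : ℕ)) * PowerSeries.X) *
        geom (qvar i - rsum ((i : ℕ) + 1)))

/-- `R_{k+1} = -(1/k) [y^{k+1}] φ(y)^k`. -/
noncomputable def Rcoeff (m k : ℕ) : PQRing m :=
  (-(1 / (k : ℚ))) • PowerSeries.coeff (k + 1) ((phi11 m) ^ k)

/-- The substitution `q_i ↦ -q_i` (fixing the `p`'s). -/
noncomputable def negq (m : ℕ) : PQRing m →ₐ[ℚ] PQRing m :=
  MvPolynomial.aeval (Sum.elim (fun i => MvPolynomial.X (Sum.inl i))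
    (fun i => - MvPolynomial.X (Sum.inr i)))

/-! ### Auxiliary lemmas -/

section Geom
variable {A : Type*} [CommRing A]

lemma coeff_geom (a : A) (n : ℕ) : PowerSeries.coeff n (geom a) = a ^ n := by
  simp [geom, PowerSeries.coeff_mk]

lemma oneSub_mul_geom (a : A) : (1 - PowerSeries.C a * PowerSeries.X) * geom a = 1 := by
  ext n
  rw [sub_mul, one_mul, map_sub, mul_assoc]
  cases n with
  | zero => simp [coeff_geom]
  | succ n =>
      rw [PowerSeries.coeff_C_mul, PowerSeries.coeff_succ_X_mul, coeff_geom, coeff_geom]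
      simp [pow_succ, mul_comm]

lemma map_geom {B : Type*} [CommRing B] (f : A →+* B) (a : A) :
    PowerSeries.map f (geom a) = geom (f a) := by
  ext n; simp [coeff_geom, PowerSeries.coeff_map]

lemma rescale_neg_one_geom (a : A) :
    PowerSeries.rescale (-1) (geom a) = geom (-a) := by
  ext n
  rw [PowerSeries.coeff_rescale, coeff_geom, coeff_geom, ← neg_pow]

lemma rescale_neg_one_C (a : A) :
    PowerSeries.rescale (-1) (PowerSeries.C a) = PowerSeries.C a := by
  ext n
  rw [PowerSeries.coeff_rescale, PowerSeries.coeff_C]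
  split_ifs with h
  · subst h; simp
  · simp

/-- the key per-factor identity -/
lemma key_factor (r r' q : A) :
    (1 - PowerSeries.C r' * PowerSeries.X) *
      ((1 - PowerSeries.C (q + r) * PowerSeries.X) * geom (q + r')) =
    (1 + PowerSeries.C ((r' - r) * q) * PowerSeries.X ^ 2 * geom r * geom (q + r')) *
      (1 - PowerSeries.C r * PowerSeries.X) := by
  have h1 : (1 - PowerSeries.C (q + r') * PowerSeries.X) * geom (q + r') = 1 :=
    oneSub_mul_geom _
  have h2 : (1 - PowerSeries.C r * PowerSeries.X) * geom r = 1 := oneSub_mul_geom _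
  have hpoly : (1 - PowerSeries.C r' * PowerSeries.X) *
      (1 - PowerSeries.C (q + r) * PowerSeries.X) =
      (1 - PowerSeries.C r * PowerSeries.X) *
        (1 - PowerSeries.C (q + r') * PowerSeries.X) +
      PowerSeries.C ((r' - r) * q) * PowerSeries.X ^ 2 := by
    simp only [map_add, map_sub, map_mul]
    ring
  calc (1 - PowerSeries.C r' * PowerSeries.X) *
      ((1 - PowerSeries.C (q + r) * PowerSeries.X) * geom (q + r'))
      = ((1 - PowerSeries.C r' * PowerSeries.X) *
        (1 - PowerSeries.C (q + r) * PowerSeries.X)) * geom (q + r') := by ring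
    _ = ((1 - PowerSeries.C r * PowerSeries.X) *
        (1 - PowerSeries.C (q + r') * PowerSeries.X) +
        PowerSeries.C ((r' - r) * q) * PowerSeries.X ^ 2) * geom (q + r') := by rw [hpoly]
    _ = (1 - PowerSeries.C r * PowerSeries.X) *
        ((1 - PowerSeries.C (q + r') * PowerSeries.X) * geom (q + r')) +
        PowerSeries.C ((r' - r) * q) * PowerSeries.X ^ 2 * geom (q + r') := by ring
    _ = (1 - PowerSeries.C r * PowerSeries.X) +
        PowerSeries.C ((r' - r) * q) * PowerSeries.X ^ 2 *
        ((1 - PowerSeries.C r * PowerSeries.X) * geom r) * geom (q + r') := by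
          rw [h1, h2]; ring
    _ = _ := by ring

/-- telescoping -/
lemma telescope (ρ θ : ℕ → A) (h0 : ρ 0 = 0) (n : ℕ) :
    (1 - PowerSeries.C (ρ n) * PowerSeries.X) *
      ∏ i ∈ Finset.range n,
        ((1 - PowerSeries.C (θ i + ρ i) * PowerSeries.X) * geom (θ i + ρ (i + 1))) =
    ∏ i ∈ Finset.range n,
      (1 + PowerSeries.C ((ρ (i + 1) - ρ i) * θ i) * PowerSeries.X ^ 2 *
        geom (ρ i) * geom (θ i + ρ (i + 1))) := by
  induction n with
  | zero => simp [h0]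
  | succ n ih =>
      rw [Finset.prod_range_succ, Finset.prod_range_succ, ← ih]
      have hk := key_factor (A := A) (ρ n) (ρ (n + 1)) (θ n)
      calc (1 - PowerSeries.C (ρ (n+1)) * PowerSeries.X) *
          ((∏ i ∈ Finset.range n,
            ((1 - PowerSeries.C (θ i + ρ i) * PowerSeries.X) * geom (θ i + ρ (i + 1)))) *
            ((1 - PowerSeries.C (θ n + ρ n) * PowerSeries.X) * geom (θ n + ρ (n + 1))))
          = ((1 - PowerSeries.C (ρ (n+1)) * PowerSeries.X) *
            ((1 - PowerSeries.C (θ n + ρ n) * PowerSeries.X) * geom (θ n + ρ (n + 1)))) *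
            ∏ i ∈ Finset.range n,
              ((1 - PowerSeries.C (θ i + ρ i) * PowerSeries.X) * geom (θ i + ρ (i + 1))) := by
                ring
        _ = _ := by rw [hk]; ring

end Geom

section NN
variable {m : ℕ}

def PNN (P : PQRing m) : Prop := ∀ d, 0 ≤ MvPolynomial.coeff d P

lemma PNN_zero : PNN (0 : PQRing m) := fun d => by simp
lemma PNN_one : PNN (1 : PQRing m) := fun d => by
  rw [MvPolynomial.coeff_one]; split <;> norm_num
lemma PNN_add {P Q : PQRing m} (hP : PNN P) (hQ : PNN Q) : PNN (P + Q) := fun d => by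
  rw [MvPolynomial.coeff_add]; exact add_nonneg (hP d) (hQ d)
lemma PNN_mul {P Q : PQRing m} (hP : PNN P) (hQ : PNN Q) : PNN (P * Q) := fun d => by
  rw [MvPolynomial.coeff_mul]
  exact Finset.sum_nonneg fun x _ => mul_nonneg (hP x.1) (hQ x.2)
lemma PNN_pow {P : PQRing m} (hP : PNN P) (n : ℕ) : PNN (P ^ n) := by
  induction n with
  | zero => simpa using PNN_one
  | succ n ih => rw [pow_succ]; exact PNN_mul ih hP
lemma PNN_X (s : Fin m ⊕ Fin m) : PNN (MvPolynomial.X s : PQRing m) := fun d => by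
  rw [MvPolynomial.coeff_X']; split <;> norm_num
lemma PNN_pvar (i : Fin m) : PNN (pvar i) := PNN_X _
lemma PNN_qvar (i : Fin m) : PNN (qvar i) := PNN_X _
lemma PNN_sum {ι : Type*} {s : Finset ι} {f : ι → PQRing m} (h : ∀ i ∈ s, PNN (f i)) :
    PNN (∑ i ∈ s, f i) := by
  classical
  induction s using Finset.induction with
  | empty => simpa using PNN_zero
  | insert x s hx ih =>
      rw [Finset.sum_insert hx]
      exact PNN_add (h _ (Finset.mem_insert_self _ _))
        (ih fun i hi => h i (Finset.mem_insert_of_mem hi))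
lemma PNN_rsum (i : ℕ) : PNN (rsum i : PQRing m) := by
  apply PNN_sum; intro j _; split
  · exact PNN_pvar j
  · exact PNN_zero

def SNN (f : PowerSeries (PQRing m)) : Prop := ∀ n, PNN (PowerSeries.coeff n f)

lemma SNN_one : SNN (1 : PowerSeries (PQRing m)) := fun n => by
  rw [PowerSeries.coeff_one]; split
  · exact PNN_one
  · exact PNN_zero
lemma SNN_add {f g : PowerSeries (PQRing m)} (hf : SNN f) (hg : SNN g) : SNN (f + g) :=
  fun n => by rw [map_add]; exact PNN_add (hf n) (hg n)
lemma SNN_mul {f g : PowerSeries (PQRing m)} (hf : SNN f) (hg : SNN g) : SNN (f * g) := by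
  intro n
  rw [PowerSeries.coeff_mul]
  exact PNN_sum fun x _ => PNN_mul (hf x.1) (hg x.2)
lemma SNN_pow {f : PowerSeries (PQRing m)} (hf : SNN f) (n : ℕ) : SNN (f ^ n) := by
  induction n with
  | zero => simpa using SNN_one
  | succ n ih => rw [pow_succ]; exact SNN_mul ih hf
lemma SNN_X : SNN (PowerSeries.X : PowerSeries (PQRing m)) := fun n => by
  rw [PowerSeries.coeff_X]; split
  · exact PNN_one
  · exact PNN_zero
lemma SNN_C {a : PQRing m} (ha : PNN a) : SNN (PowerSeries.C a) := fun n => by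
  rw [PowerSeries.coeff_C]; split
  · simpa
  · exact PNN_zero
lemma SNN_geom {a : PQRing m} (ha : PNN a) : SNN (geom a) := fun n => by
  rw [coeff_geom]; exact PNN_pow ha n
lemma SNN_prod {n : ℕ} {f : ℕ → PowerSeries (PQRing m)} (h : ∀ i, SNN (f i)) :
    SNN (∏ i ∈ Finset.range n, f i) := by
  induction n with
  | zero => simpa using SNN_one
  | succ n ih => rw [Finset.prod_range_succ]; exact SNN_mul ih (h n)

end NN

section Transform
variable {m : ℕ}

/-- `q'` extends `qvar` by zero. -/
noncomputable def qext (m : ℕ) (i : ℕ) : PQRing m :=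
  if h : i < m then qvar ⟨i, h⟩ else 0

lemma negq_pvar (i : Fin m) : negq m (pvar i) = pvar i := by
  simp [negq, pvar, MvPolynomial.aeval_X]

lemma negq_qvar (i : Fin m) : negq m (qvar i) = -qvar i := by
  simp [negq, qvar, MvPolynomial.aeval_X]

lemma negq_rsum (i : ℕ) : negq m (rsum i) = rsum i := by
  unfold rsum
  rw [map_sum]
  refine Finset.sum_congr rfl fun j _ => ?_
  rw [apply_ite (negq m), negq_pvar, map_zero]

lemma rsum_succ (i : ℕ) :
    (rsum (i + 1) : PQRing m) = rsum i + (if h : i < m then pvar ⟨i, h⟩ else 0) := by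
  unfold rsum
  have hsplit : ∀ j : Fin m, (if (j : ℕ) < i + 1 then pvar j else 0) =
      (if (j : ℕ) < i then pvar j else 0) + (if (j : ℕ) = i then pvar j else 0) := by
    intro j
    rcases lt_trichotomy (j : ℕ) i with h | h | h
    · rw [if_pos (by omega), if_pos h, if_neg (by omega), add_zero]
    · rw [if_pos (by omega), if_neg (by omega), if_pos h, zero_add]
    · rw [if_neg (by omega), if_neg (by omega), if_neg (by omega), add_zero]
  rw [Finset.sum_congr rfl fun j _ => hsplit j, Finset.sum_add_distrib]
  congr 1
  split
  · next h =>
      rw [show (fun j : Fin m => if (j : ℕ) = i then pvar j else 0) =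
          (fun j : Fin m => if j = ⟨i, h⟩ then pvar j else 0) by
        funext j; congr 1; simp [Fin.ext_iff]]
      simp
  · next h =>
      apply Finset.sum_eq_zero
      intro j _
      rw [if_neg]
      intro e
      exact h (e ▸ j.isLt)

lemma rsum_top : (rsum m : PQRing m) = ∑ j : Fin m, pvar j := by
  unfold rsum
  exact Finset.sum_congr rfl fun j _ => if_pos j.isLt

/-- the transformed series `F(z) = (negq φ)(-z)` -/
noncomputable def Fser (m : ℕ) : PowerSeries (PQRing m) :=
  PowerSeries.rescale (-1) (PowerSeries.map (negq m).toRingHom (phi11 m))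

lemma negq_rh (x : PQRing m) : (negq m).toRingHom x = negq m x := rfl

lemma qext_coe (i : Fin m) : qext m (i : ℕ) = qvar i := by
  simp [qext]

lemma Fser_eq_prod : Fser m =
    ∏ i ∈ Finset.range m,
      (1 + PowerSeries.C ((rsum (i + 1) - rsum i) * qext m i) *
        PowerSeries.X ^ 2 * geom (rsum i) * geom (qext m i + rsum (i + 1))) := by
  have hT : Fser m =
      (1 - PowerSeries.C (rsum m) * PowerSeries.X) *
      ∏ i : Fin m,
        ((1 - PowerSeries.C (qvar i + rsum (i : ℕ)) * PowerSeries.X) *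
          geom (qvar i + rsum ((i : ℕ) + 1))) := by
    unfold Fser phi11
    rw [map_mul, map_mul]
    congr 1
    · simp only [map_add, map_one, map_mul, PowerSeries.map_C, PowerSeries.map_X,
        PowerSeries.rescale_X, rescale_neg_one_C, negq_rh, map_sum, negq_pvar]
      rw [← map_sum, ← rsum_top]
      simp only [map_neg, map_one]
      ring
    · rw [map_prod, map_prod]
      refine Finset.prod_congr rfl fun i _ => ?_
      rw [map_mul, map_mul]
      congr 1
      · simp only [map_sub, map_one, map_mul, PowerSeries.map_C, PowerSeries.map_X,
          PowerSeries.rescale_X, rescale_neg_one_C, negq_rh, negq_qvar, negq_rsum,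
          map_neg, map_add]
        ring
      · rw [map_geom, rescale_neg_one_geom, negq_rh, map_sub, negq_qvar, negq_rsum]
        congr 1
        ring
  rw [hT]
  have hconv : ∏ i : Fin m,
      ((1 - PowerSeries.C (qvar i + rsum (i : ℕ)) * PowerSeries.X) *
        geom (qvar i + rsum ((i : ℕ) + 1))) =
      ∏ i ∈ Finset.range m,
        ((1 - PowerSeries.C (qext m i + rsum i) * PowerSeries.X) *
          geom (qext m i + rsum (i + 1))) := by
    rw [← Fin.prod_univ_eq_prod_range
      (fun i => (1 - PowerSeries.C (qext m i + rsum i) * PowerSeries.X) *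
        geom (qext m i + rsum (i + 1))) m]
    exact Finset.prod_congr rfl fun i _ => by rw [qext_coe]
  rw [hconv]
  exact telescope rsum (qext m) (by simp [rsum]) m

lemma SNN_Fser : SNN (Fser m) := by
  rw [Fser_eq_prod]
  apply SNN_prod
  intro i
  have hp : PNN (rsum (i + 1) - rsum i : PQRing m) := by
    rw [rsum_succ, add_sub_cancel_left]
    split
    · exact PNN_pvar _
    · exact PNN_zero
  have hq : PNN (qext m i) := by
    unfold qext
    split
    · exact PNN_qvar _
    · exact PNN_zero
  exact SNN_add SNN_one
    (SNN_mul (SNN_mul (SNN_mul (SNN_C (PNN_mul hp hq)) (SNN_pow SNN_X 2))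
      (SNN_geom (PNN_rsum i))) (SNN_geom (PNN_add hq (PNN_rsum (i + 1)))))

end Transform

/-- For every `k ≥ 1`, the polynomial
`(-1)^k R_{k+1}(p_1,…,p_m; -q_1,…,-q_m)` has all coefficients nonnegative. -/
theorem top_terms_nonneg (m : ℕ) (k : ℕ) (hk : 1 ≤ k) :
    ∀ d, 0 ≤ MvPolynomial.coeff d (((-1 : ℚ) ^ k) • negq m (Rcoeff m k)) := by
  intro d
  have hsnn : SNN (Fser m ^ k) := SNN_pow SNN_Fser k
  have h1 : negq m (Rcoeff m k) =
      (-(1 / (k : ℚ))) • PowerSeries.coeff (k + 1)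
        ((PowerSeries.map (negq m).toRingHom (phi11 m)) ^ k) := by
    unfold Rcoeff
    rw [map_smul]
    congr 1
    rw [← map_pow, PowerSeries.coeff_map]
    rfl
  have h2 : PowerSeries.coeff (k + 1)
        ((PowerSeries.map (negq m).toRingHom (phi11 m)) ^ k) =
      (-1 : PQRing m) ^ (k + 1) * PowerSeries.coeff (k + 1) (Fser m ^ k) := by
    have hF : Fser m ^ k =
        PowerSeries.rescale (-1) ((PowerSeries.map (negq m).toRingHom (phi11 m)) ^ k) := by
      rw [Fser, map_pow]
    rw [hF, PowerSeries.coeff_rescale, ← mul_assoc, ← mul_pow]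
    norm_num
  rw [h1, h2, MvPolynomial.coeff_smul, MvPolynomial.coeff_smul,
    show ((-1 : PQRing m)) ^ (k + 1) = MvPolynomial.C ((-1 : ℚ) ^ (k + 1)) by
      rw [map_pow, map_neg, map_one],
    MvPolynomial.coeff_C_mul]
  have hQ : 0 ≤ MvPolynomial.coeff d
      (PowerSeries.coeff (k + 1) (Fser m ^ k)) := hsnn (k + 1) d
  simp only [smul_eq_mul]
  set c := MvPolynomial.coeff d (PowerSeries.coeff (k + 1) (Fser m ^ k))
  have hrw : (-1 : ℚ) ^ k * (-(1 / (k : ℚ)) * ((-1 : ℚ) ^ (k + 1) * c)) = (1 / (k : ℚ)) * c := by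
    rcases Nat.even_or_odd k with he | ho
    · rw [he.neg_one_pow, (he.add_one).neg_one_pow]; ring
    · rw [ho.neg_one_pow, (ho.add_one).neg_one_pow]; ring
  rw [hrw]
  have : 0 ≤ (1 / (k : ℚ)) := by positivity
  exact mul_nonneg this hQ
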